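/- arXiv:1904.02986 — 2 statements merged into one kernel-verified Lean document; each statement's English description precedes it below -/
import Mathlib

section
/- Let m, n, r ∈ ℕ with m ≥ n, let (a_k) be a sequence of complex numbers, and let t ∈ ℝ be such that t ≠ 2lπ/r for every integer l. Then ∑_{k=n}^{m} a_k sin(kt) = −∑_{k=n}^{m} (a_k − a_{k+r}) D̃°_{k,r}(t) + ∑_{k=m+1}^{m+r} a_k D̃°_{k,−r}(t) − ∑_{k=n}^{n+r−1} a_k D̃°_{k,−r}(t). -/
open Real Finset

noncomputable section

/-- The kernel `D̃°_{k,ρ}(t) = cos((2k+ρ)t/2) / (2 sin(ρt/2))`. -/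
def DkerConj (k : ℕ) (ρ : ℤ) (t : ℝ) : ℝ :=
  Real.cos ((2 * (k : ℝ) + (ρ : ℝ)) * t / 2) / (2 * Real.sin ((ρ : ℝ) * t / 2))

lemma sin_eq_diff (k r : ℕ) (t : ℝ) (hs : Real.sin ((r : ℝ) * t / 2) ≠ 0) :
    Real.sin ((k : ℝ) * t)
      = DkerConj (k + r) (-(r : ℤ)) t - DkerConj k (-(r : ℤ)) t := by
  unfold DkerConj
  push_cast
  rw [show (2 * ((k : ℝ) + (r : ℝ)) + -(r : ℝ)) * t / 2 = (k : ℝ) * t + (r : ℝ) * t / 2 by ring,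
      show (2 * (k : ℝ) + -(r : ℝ)) * t / 2 = (k : ℝ) * t - (r : ℝ) * t / 2 by ring,
      show (-(r : ℝ)) * t / 2 = -((r : ℝ) * t / 2) by ring,
      Real.sin_neg, Real.cos_add, Real.cos_sub]
  field_simp
  rw [mul_comm t (r : ℝ), eq_div_iff hs]
  ring

lemma dker_neg (k r : ℕ) (t : ℝ) :
    DkerConj k (r : ℤ) t = -(DkerConj (k + r) (-(r : ℤ)) t) := by
  unfold DkerConj
  push_cast
  rw [show (2 * ((k : ℝ) + (r : ℝ)) + -(r : ℝ)) * t / 2 = (2 * (k : ℝ) + (r : ℝ)) * t / 2 by ring,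
      show (-(r : ℝ)) * t / 2 = -((r : ℝ) * t / 2) by ring, Real.sin_neg]
  ring

/-- **Lemma 3, sine part.** Summation-by-parts identity with `r`-differences. -/
theorem lemma_three_sin (m n r : ℕ) (hr : 1 ≤ r) (hmn : n ≤ m) (a : ℕ → ℂ) (t : ℝ)
    (ht : ∀ l : ℤ, t ≠ 2 * (l : ℝ) * π / (r : ℝ)) :
    ∑ k ∈ Finset.Icc n m, a k * ((Real.sin ((k : ℝ) * t) : ℝ) : ℂ)
      = -∑ k ∈ Finset.Icc n m, (a k - a (k + r)) * ((DkerConj k (r : ℤ) t : ℝ) : ℂ)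
        + ∑ k ∈ Finset.Icc (m + 1) (m + r), a k * ((DkerConj k (-(r : ℤ)) t : ℝ) : ℂ)
        - ∑ k ∈ Finset.Icc n (n + r - 1), a k * ((DkerConj k (-(r : ℤ)) t : ℝ) : ℂ) := by
  have hr0 : (r : ℝ) ≠ 0 := Nat.cast_ne_zero.mpr (by omega)
  have hs : Real.sin ((r : ℝ) * t / 2) ≠ 0 := by
    intro h
    rcases Real.sin_eq_zero_iff.mp h with ⟨l, hl⟩
    refine ht l ?_
    field_simp
    linarith
  set f : ℕ → ℂ := fun k => ((DkerConj k (-(r : ℤ)) t : ℝ) : ℂ) with hf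
  have key1 : ∀ k : ℕ, ((Real.sin ((k : ℝ) * t) : ℝ) : ℂ) = f (k + r) - f k := by
    intro k
    simp only [hf]
    rw [← Complex.ofReal_sub, sin_eq_diff k r t hs]
  have key2 : ∀ k : ℕ, ((DkerConj k (r : ℤ) t : ℝ) : ℂ) = -(f (k + r)) := by
    intro k
    simp only [hf]
    rw [← Complex.ofReal_neg, dker_neg k r t]
  simp only [key1, key2]
  have hshift : ∑ k ∈ Finset.Icc n m, a (k + r) * f (k + r)
      = ∑ k ∈ Finset.Icc (n + r) (m + r), a k * f k := by
    rw [← Finset.map_add_right_Icc, Finset.sum_map]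
    rfl
  have hsplit1 : ∑ k ∈ Finset.Icc n (m + r), a k * f k
      = ∑ k ∈ Finset.Icc n m, a k * f k + ∑ k ∈ Finset.Icc (m + 1) (m + r), a k * f k := by
    rw [Finset.Icc_add_one_left_eq_Ioc, ← Finset.sum_union]
    · congr 1
      ext x
      simp only [Finset.mem_union, Finset.mem_Icc, Finset.mem_Ioc]
      omega
    · rw [Finset.disjoint_left]
      intro x hx hx'
      simp only [Finset.mem_Icc, Finset.mem_Ioc] at hx hx'
      omega
  have hsplit2 : ∑ k ∈ Finset.Icc n (m + r), a k * f k
      = ∑ k ∈ Finset.Icc n (n + r - 1), a k * f k + ∑ k ∈ Finset.Icc (n + r) (m + r), a k * f k := by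
    rw [show n + r = (n + r - 1) + 1 by omega, Finset.Icc_add_one_left_eq_Ioc, ← Finset.sum_union]
    · congr 1
      ext x
      simp only [Finset.mem_union, Finset.mem_Icc, Finset.mem_Ioc]
      omega
    · rw [Finset.disjoint_left]
      intro x hx hx'
      simp only [Finset.mem_Icc, Finset.mem_Ioc] at hx hx'
      omega
  simp only [mul_sub, sub_mul, mul_neg, neg_neg, Finset.sum_sub_distrib, Finset.sum_neg_distrib]
  linear_combination hshift + hsplit1 - hsplit2
end
end

section
/- Let r ∈ ℕ, let n be fixed, and let (a_{n,k})_{k≥0} be nonnegative real numbers with lim_{k→∞} a_{n,k} = 0 and ∑_{k=0}^∞ a_{n,k} = 1. If t ∈ ℝ satisfies t ≠ 2lπ/r for every integer l, then |∑_{k=0}^∞ a_{n,k} D̃°_{k,1}(t)| ≤ (1/(2|sin(t/2) sin(rt/2)|)) (A_{n,r} + ∑_{k=0}^{r−1} a_{n,k}) ≤ A_{n,r}/|sin(t/2) sin(rt/2)|, where A_{n,r} = ∑_{k=0}^∞ |a_{n,k} − a_{n,k+r}|. -/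
open Real Filter

noncomputable section

private lemma aux_SA (r : ℕ) (hr : 1 ≤ r) (a : ℕ → ℝ)
    (halim : Tendsto a atTop (nhds 0))
    (hΔ : Summable (fun k => |a k - a (k+r)|)) :
    ∑ k ∈ Finset.range r, a k ≤ ∑' k, |a k - a (k+r)| := by
  have key : ∀ J : ℕ, ∑ k ∈ Finset.range r, (a k - a (k + J*r)) ≤ ∑' k, |a k - a (k+r)| := by
    intro J
    have h1 : ∀ k : ℕ, a k - a (k + J*r) = ∑ j ∈ Finset.range J, (a (k + j*r) - a (k + j*r + r)) := by
      intro k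
      have := Finset.sum_range_sub' (fun j => a (k + j*r)) J
      simp only [Nat.zero_mul, Nat.add_zero] at this
      rw [← this]
      apply Finset.sum_congr rfl
      intro j _
      congr 2
      ring
    calc ∑ k ∈ Finset.range r, (a k - a (k + J*r))
        ≤ ∑ k ∈ Finset.range r, ∑ j ∈ Finset.range J, |a (k + j*r) - a (k + j*r + r)| := by
          apply Finset.sum_le_sum
          intro k _
          rw [h1 k]
          exact Finset.sum_le_sum (fun j _ => le_abs_self _)
      _ = ∑ p ∈ (Finset.range r ×ˢ Finset.range J).image (fun p : ℕ × ℕ => p.1 + p.2 * r),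
            |a p - a (p + r)| := by
          rw [Finset.sum_image, Finset.sum_product]
          intro p hp q hq hpq
          simp only [Finset.mem_coe, Finset.mem_product, Finset.mem_range] at hp hq
          have h1 : p.1 = q.1 := by
            have := congrArg (· % r) hpq
            simpa [Nat.add_mul_mod_self_right, Nat.mod_eq_of_lt hp.1, Nat.mod_eq_of_lt hq.1] using this
          have h2 : p.2 = q.2 := by
            simp only [h1] at hpq
            have : p.2 * r = q.2 * r := by omega
            exact Nat.eq_of_mul_eq_mul_right (by omega) this
          exact Prod.ext h1 h2
      _ ≤ ∑' k, |a k - a (k+r)| := Summable.sum_le_tsum _ (fun _ _ => abs_nonneg _) hΔ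
  have hlim : Tendsto (fun J : ℕ => ∑ k ∈ Finset.range r, (a k - a (k + J*r))) atTop
      (nhds (∑ k ∈ Finset.range r, a k)) := by
    have : ∀ k : ℕ, Tendsto (fun J : ℕ => a (k + J*r)) atTop (nhds 0) := by
      intro k
      apply halim.comp
      apply tendsto_atTop_mono (fun J => ?_) tendsto_id
      calc (J : ℕ) = J * 1 := (mul_one _).symm
        _ ≤ J * r := Nat.mul_le_mul_left _ hr
        _ ≤ k + J * r := Nat.le_add_left _ _
    have := tendsto_finset_sum (Finset.range r)
      (fun k _ => (tendsto_const_nhds (x := a k)).sub (this k))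
    simpa using this
  exact le_of_tendsto hlim (Eventually.of_forall key)

private lemma aux_main (r : ℕ) (a : ℕ → ℝ) (ha0 : ∀ k, 0 ≤ a k) (hsa : Summable a)
    (hΔ : Summable (fun k => |a k - a (k+r)|)) (t : ℝ) :
    2 * |Real.sin ((r:ℝ)*t/2)| * |∑' k : ℕ, a k * Real.cos ((2*(k:ℝ)+1)*t/2)|
      ≤ (∑' k, |a k - a (k+r)|) + ∑ k ∈ Finset.range r, a k := by
  set u : ℕ → ℝ := fun m => Real.sin ((2*(m:ℝ) + 1 - r) * t / 2) with hu_def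
  have hu : ∀ m, |u m| ≤ 1 := fun m => abs_sin_le_one _
  have habs : ∀ (b : ℕ → ℝ) (v : ℕ → ℝ), (∀ m, |v m| ≤ 1) → Summable b →
      Summable (fun k => b k * v k) := by
    intro b v hv hb
    apply Summable.of_norm_bounded (g := fun k => |b k|) hb.abs
    intro k
    rw [Real.norm_eq_abs, abs_mul]
    exact mul_le_of_le_one_right (abs_nonneg _) (hv k)
  have hsash : Summable (fun k => a (k+r)) := (summable_nat_add_iff r).mpr hsa
  have hau : Summable (fun k => a k * u k) := habs a u hu hsa
  have haur : Summable (fun k => a k * u (k+r)) := habs a (fun k => u (k+r)) (fun k => hu _) hsa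
  have hashur : Summable (fun k => a (k+r) * u (k+r)) :=
    habs (fun k => a (k+r)) (fun k => u (k+r)) (fun k => hu _) hsash
  have hΔu : Summable (fun k => (a k - a (k+r)) * u (k+r)) := by
    apply Summable.of_norm_bounded hΔ
    intro k
    rw [Real.norm_eq_abs, abs_mul]
    exact mul_le_of_le_one_right (abs_nonneg _) (hu _)
  have hkey : ∀ k : ℕ, a k * (u (k+r) - u k)
      = 2 * Real.sin ((r:ℝ)*t/2) * (a k * Real.cos ((2*(k:ℝ)+1)*t/2)) := by
    intro k
    have : u (k+r) - u k = 2 * Real.sin ((r:ℝ)*t/2) * Real.cos ((2*(k:ℝ)+1)*t/2) := by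
      simp only [hu_def]
      rw [Real.sin_sub_sin]
      push_cast
      ring_nf
    rw [this]; ring
  have hsplit : (∑' k, a k * u (k+r)) - ∑' k, a k * u k
      = 2 * Real.sin ((r:ℝ)*t/2) * ∑' k, a k * Real.cos ((2*(k:ℝ)+1)*t/2) := by
    rw [← Summable.tsum_sub haur hau, ← tsum_mul_left]
    apply tsum_congr
    intro k
    rw [← mul_sub, hkey k]
  have hshift : ∑' k, a k * u k
      = (∑ k ∈ Finset.range r, a k * u k) + ∑' k, a (k+r) * u (k+r) := by
    rw [← Summable.sum_add_tsum_nat_add r hau]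
  have hcomb : 2 * Real.sin ((r:ℝ)*t/2) * ∑' k, a k * Real.cos ((2*(k:ℝ)+1)*t/2)
      = (∑' k, (a k - a (k+r)) * u (k+r)) - ∑ k ∈ Finset.range r, a k * u k := by
    rw [← hsplit, hshift]
    have h4 : ∑' k, (a k - a (k+r)) * u (k+r)
        = (∑' k, a k * u (k+r)) - ∑' k, a (k+r) * u (k+r) := by
      rw [← Summable.tsum_sub haur hashur]
      exact tsum_congr fun k => by ring
    rw [h4]; ring
  have h1 : |∑' k, (a k - a (k+r)) * u (k+r)| ≤ ∑' k, |a k - a (k+r)| := by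
    have := norm_tsum_le_tsum_norm (f := fun k => (a k - a (k+r)) * u (k+r)) (by
      simpa only [Real.norm_eq_abs] using hΔu.abs)
    rw [Real.norm_eq_abs] at this
    refine this.trans ?_
    apply Summable.tsum_le_tsum _ (by simpa only [Real.norm_eq_abs] using hΔu.abs) hΔ
    intro k
    rw [Real.norm_eq_abs, abs_mul]
    exact mul_le_of_le_one_right (abs_nonneg _) (hu _)
  have h2 : |∑ k ∈ Finset.range r, a k * u k| ≤ ∑ k ∈ Finset.range r, a k := by
    refine (Finset.abs_sum_le_sum_abs _ _).trans ?_
    apply Finset.sum_le_sum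
    intro k _
    rw [abs_mul, abs_of_nonneg (ha0 k)]
    exact mul_le_of_le_one_right (ha0 k) (hu _)
  calc 2 * |Real.sin ((r:ℝ)*t/2)| * |∑' k : ℕ, a k * Real.cos ((2*(k:ℝ)+1)*t/2)|
      = |2 * Real.sin ((r:ℝ)*t/2) * ∑' k, a k * Real.cos ((2*(k:ℝ)+1)*t/2)| := by
        rw [abs_mul, abs_mul, abs_two]
    _ = |(∑' k, (a k - a (k+r)) * u (k+r)) - ∑ k ∈ Finset.range r, a k * u k| := by rw [hcomb]
    _ ≤ |∑' k, (a k - a (k+r)) * u (k+r)| + |∑ k ∈ Finset.range r, a k * u k| := abs_sub _ _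
    _ ≤ (∑' k, |a k - a (k+r)|) + ∑ k ∈ Finset.range r, a k := add_le_add h1 h2

/-- **Lemma 5.** Bound on the `A`-transform of the conjugate Dirichlet kernels by
`r`-differences of the entries. -/
theorem lemma_five (r : ℕ) (hr : 1 ≤ r) (a : ℕ → ℝ) (ha0 : ∀ k, 0 ≤ a k)
    (halim : Tendsto a atTop (nhds 0)) (hasum : HasSum a 1) (t : ℝ)
    (ht : ∀ l : ℤ, t ≠ 2 * (l : ℝ) * π / (r : ℝ)) :
    |∑' k : ℕ, a k * DkerConj k 1 t|
        ≤ (1 / (2 * |Real.sin (t / 2) * Real.sin ((r : ℝ) * t / 2)|)) *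
            ((∑' k : ℕ, |a k - a (k + r)|) + ∑ k ∈ Finset.range r, a k)
      ∧ (1 / (2 * |Real.sin (t / 2) * Real.sin ((r : ℝ) * t / 2)|)) *
            ((∑' k : ℕ, |a k - a (k + r)|) + ∑ k ∈ Finset.range r, a k)
          ≤ (∑' k : ℕ, |a k - a (k + r)|) /
              |Real.sin (t / 2) * Real.sin ((r : ℝ) * t / 2)| := by
  have hsa : Summable a := hasum.summable
  have hrr : (0:ℝ) < (r:ℝ) := by exact_mod_cast hr
  have hc0 : Real.sin (t/2) ≠ 0 := by
    intro h
    rw [Real.sin_eq_zero_iff] at h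
    obtain ⟨n, hn⟩ := h
    refine ht (n * r) ?_
    field_simp
    push_cast
    nlinarith [hn]
  have hsr0 : Real.sin ((r:ℝ)*t/2) ≠ 0 := by
    intro h
    rw [Real.sin_eq_zero_iff] at h
    obtain ⟨n, hn⟩ := h
    refine ht n ?_
    field_simp
    nlinarith [hn]
  have hΔ : Summable (fun k => |a k - a (k+r)|) := by
    apply Summable.of_norm_bounded (g := fun k => a k + a (k+r))
        (hsa.add ((summable_nat_add_iff r).mpr hsa))
    intro k
    rw [Real.norm_eq_abs, abs_abs]
    calc |a k - a (k+r)| ≤ |a k| + |a (k+r)| := abs_sub _ _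
      _ = a k + a (k+r) := by rw [abs_of_nonneg (ha0 k), abs_of_nonneg (ha0 _)]
  set A := ∑' k, |a k - a (k+r)| with hA_def
  set S := ∑ k ∈ Finset.range r, a k with hS_def
  have hA0 : 0 ≤ A := tsum_nonneg (fun k => abs_nonneg _)
  have hS0 : 0 ≤ S := Finset.sum_nonneg (fun k _ => ha0 k)
  have hSA : S ≤ A := aux_SA r hr a halim hΔ
  have hcp : (0:ℝ) < |Real.sin (t/2)| := abs_pos.mpr hc0
  have hsrp : (0:ℝ) < |Real.sin ((r:ℝ)*t/2)| := abs_pos.mpr hsr0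
  set X := ∑' k : ℕ, a k * Real.cos ((2*(k:ℝ)+1)*t/2) with hX_def
  have hmain : 2 * |Real.sin ((r:ℝ)*t/2)| * |X| ≤ A + S := aux_main r a ha0 hsa hΔ t
  have hDk : ∀ k : ℕ, a k * DkerConj k 1 t
      = (a k * Real.cos ((2*(k:ℝ)+1)*t/2)) / (2 * Real.sin (t/2)) := by
    intro k
    simp only [DkerConj, Int.cast_one, one_mul]
    ring
  have htsum : ∑' k : ℕ, a k * DkerConj k 1 t = X / (2 * Real.sin (t/2)) := by
    rw [hX_def, ← tsum_div_const]
    exact tsum_congr hDk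
  constructor
  · rw [htsum, abs_div, abs_mul, abs_two, abs_mul]
    rw [div_le_iff₀ (by positivity)]
    rw [show 1 / (2 * (|Real.sin (t/2)| * |Real.sin ((r:ℝ)*t/2)|)) * (A + S) *
        (2 * |Real.sin (t/2)|) = (A + S) / |Real.sin ((r:ℝ)*t/2)| from by field_simp]
    rw [le_div_iff₀ hsrp]
    nlinarith [abs_nonneg X, mul_nonneg (abs_nonneg X) hsrp.le]
  · rw [abs_mul]
    rw [show (1:ℝ) / (2 * (|Real.sin (t/2)| * |Real.sin ((r:ℝ)*t/2)|)) * (A + S)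
        = (A + S) / (2 * (|Real.sin (t/2)| * |Real.sin ((r:ℝ)*t/2)|)) from by ring]
    rw [div_le_div_iff₀ (by positivity) (by positivity)]
    nlinarith [mul_pos hcp hsrp]
end
end
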